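/- Let Ω ⊂ ℝ^m be a nonempty open set with finite diameter d, and define H_Ω(t) = ∫_Ω ∫_Ω (4πt)^{-m/2} exp(-|x-y|²/(4t)) dx dy. Then for all t ≥ d², H_Ω''(t) ≥ ((4m²+4m-7)/(16t²))·H_Ω(t). -/

import Mathlib

open Real MeasureTheory

lemma hc_hasDerivAt_F (p b s : ℝ) (hs : 0 < s) :
    HasDerivAt (fun s : ℝ => (4 * π * s) ^ p * Real.exp (-b / (4 * s)))
      ((4 * π * s) ^ p * Real.exp (-b / (4 * s)) * (b / (4 * s ^ 2) + p / s)) s := by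
  have h4s : 0 < 4 * π * s := by positivity
  have h1 : HasDerivAt (fun s : ℝ => (4 * π * s) ^ p)
      ((4 * π) * p * (4 * π * s) ^ (p - 1)) s := by
    have hlin : HasDerivAt (fun s : ℝ => 4 * π * s) (4 * π) s := by
      simpa using (hasDerivAt_id s).const_mul (4 * π)
    exact hlin.rpow_const (Or.inl h4s.ne')
  have h2 : HasDerivAt (fun s : ℝ => Real.exp (-b / (4 * s)))
      (Real.exp (-b / (4 * s)) * (b / (4 * s ^ 2))) s := by
    have hinv : HasDerivAt (fun s : ℝ => (-b / 4) * s⁻¹) ((-b / 4) * (-(s ^ 2)⁻¹)) s :=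
      (hasDerivAt_inv hs.ne').const_mul _
    have e1 : (fun s : ℝ => (-b / 4) * s⁻¹) = fun s : ℝ => -b / (4 * s) := by
      funext x; ring
    rw [e1] at hinv
    have hinn : HasDerivAt (fun s : ℝ => -b / (4 * s)) (b / (4 * s ^ 2)) s := by
      convert hinv using 1
      field_simp
    exact hinn.exp
  have h := h1.mul h2
  refine h.congr_deriv ?_
  have hrw : (4 * π * s) ^ (p - 1) = (4 * π * s) ^ p / (4 * π * s) := by
    rw [Real.rpow_sub h4s, Real.rpow_one]
  rw [hrw]
  field_simp
  ring

lemma hc_hasDerivAt_F1 (p b s : ℝ) (hs : 0 < s) :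
    HasDerivAt (fun s : ℝ => (4 * π * s) ^ p * Real.exp (-b / (4 * s))
        * (b / (4 * s ^ 2) + p / s))
      ((4 * π * s) ^ p * Real.exp (-b / (4 * s)) *
        ((b / (4 * s ^ 2) + p / s) ^ 2 + (-b / (2 * s ^ 3) - p / s ^ 2))) s := by
  have hq : HasDerivAt (fun s : ℝ => b / (4 * s ^ 2) + p / s)
      (-b / (2 * s ^ 3) - p / s ^ 2) s := by
    have h1 : HasDerivAt (fun s : ℝ => (b / 4) * (s⁻¹ * s⁻¹))
        ((b / 4) * (-(s ^ 2)⁻¹ * s⁻¹ + s⁻¹ * -(s ^ 2)⁻¹)) s :=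
      ((hasDerivAt_inv hs.ne').mul (hasDerivAt_inv hs.ne')).const_mul _
    have h2 : HasDerivAt (fun s : ℝ => p * s⁻¹) (p * (-(s ^ 2)⁻¹)) s :=
      (hasDerivAt_inv hs.ne').const_mul _
    have h : HasDerivAt (fun s : ℝ => (b / 4) * (s⁻¹ * s⁻¹) + p * s⁻¹) _ s := h1.add h2
    have e1 : (fun s : ℝ => (b / 4) * (s⁻¹ * s⁻¹) + p * s⁻¹)
        = fun s : ℝ => b / (4 * s ^ 2) + p / s := by
      funext x; ring
    rw [e1] at h
    convert h using 1
    field_simp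
    ring
  have h := (hc_hasDerivAt_F p b s hs).mul hq
  refine h.congr_deriv ?_
  ring

lemma hc_key (m : ℕ) (b t : ℝ) (hb0 : 0 ≤ b) (hbt : b ≤ t) (ht : 0 < t) :
    (4 * (m : ℝ) ^ 2 + 4 * m - 7) / (16 * t ^ 2)
        * ((4 * π * t) ^ (-(m : ℝ) / 2) * Real.exp (-b / (4 * t)))
      ≤ (4 * π * t) ^ (-(m : ℝ) / 2) * Real.exp (-b / (4 * t)) *
        ((b / (4 * t ^ 2) + (-(m : ℝ) / 2) / t) ^ 2
          + (-b / (2 * t ^ 3) - (-(m : ℝ) / 2) / t ^ 2)) := by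
  have hA : 0 < (4 * π * t) ^ (-(m : ℝ) / 2) * Real.exp (-b / (4 * t)) := by positivity
  have hnum : 0 ≤ (t - b) * ((4 * (m : ℝ) + 7) * t - b) := by
    have h1 : (0:ℝ) ≤ t - b := by linarith
    have h2 : (0:ℝ) ≤ (4 * (m : ℝ) + 7) * t - b := by
      nlinarith [show (0:ℝ) ≤ (m:ℝ) from Nat.cast_nonneg m]
    exact mul_nonneg h1 h2
  have heq : ((b / (4 * t ^ 2) + (-(m : ℝ) / 2) / t) ^ 2
          + (-b / (2 * t ^ 3) - (-(m : ℝ) / 2) / t ^ 2))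
        - (4 * (m : ℝ) ^ 2 + 4 * m - 7) / (16 * t ^ 2)
      = ((t - b) * ((4 * (m : ℝ) + 7) * t - b)) / (16 * t ^ 4) := by
    field_simp
    ring
  have hc : (4 * (m : ℝ) ^ 2 + 4 * m - 7) / (16 * t ^ 2)
      ≤ ((b / (4 * t ^ 2) + (-(m : ℝ) / 2) / t) ^ 2
          + (-b / (2 * t ^ 3) - (-(m : ℝ) / 2) / t ^ 2)) := by
    have h3 : 0 ≤ ((t - b) * ((4 * (m : ℝ) + 7) * t - b)) / (16 * t ^ 4) :=
      div_nonneg hnum (by positivity)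
    linarith
  calc (4 * (m : ℝ) ^ 2 + 4 * m - 7) / (16 * t ^ 2)
        * ((4 * π * t) ^ (-(m : ℝ) / 2) * Real.exp (-b / (4 * t)))
      = ((4 * π * t) ^ (-(m : ℝ) / 2) * Real.exp (-b / (4 * t)))
        * ((4 * (m : ℝ) ^ 2 + 4 * m - 7) / (16 * t ^ 2)) := by ring
    _ ≤ _ := mul_le_mul_of_nonneg_left hc hA.le

set_option maxHeartbeats 2000000 in
theorem heat_content_second_deriv_lower_bound (m : ℕ) (hm : 1 ≤ m)
    (Ω : Set (EuclideanSpace ℝ (Fin m))) (hΩ : IsOpen Ω) (hne : Ω.Nonempty)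
    (hbd : Bornology.IsBounded Ω) (t : ℝ) (ht : Metric.diam Ω ^ 2 ≤ t) :
    ((4 * (m : ℝ) ^ 2 + 4 * m - 7) / (16 * t ^ 2))
        * (∫ x in Ω, ∫ y in Ω,
            (4 * Real.pi * t) ^ (-(m : ℝ) / 2) * Real.exp (-(dist x y) ^ 2 / (4 * t)))
      ≤ deriv (deriv (fun s : ℝ => ∫ x in Ω, ∫ y in Ω,
            (4 * Real.pi * s) ^ (-(m : ℝ) / 2) * Real.exp (-(dist x y) ^ 2 / (4 * s)))) t := by
  classical
  set p : ℝ := -(m : ℝ) / 2 with hp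
  have hm' : (1:ℝ) ≤ (m:ℝ) := by exact_mod_cast hm
  have hple : p ≤ 0 := by rw [hp]; linarith
  -- positivity of the diameter
  have hd0 : 0 < Metric.diam Ω := by
    obtain ⟨x, hx⟩ := hne
    obtain ⟨r, hr, hball⟩ := Metric.isOpen_iff.mp hΩ x hx
    set v : EuclideanSpace ℝ (Fin m) := EuclideanSpace.single ⟨0, hm⟩ (r / 2) with hv
    have hnv : ‖v‖ = r / 2 := by
      rw [hv, EuclideanSpace.norm_single, Real.norm_eq_abs, abs_of_pos (by linarith)]
    have hy : x + v ∈ Ω := by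
      apply hball
      rw [Metric.mem_ball, dist_eq_norm, add_sub_cancel_left, hnv]
      linarith
    have h1 : dist x (x + v) ≤ Metric.diam Ω := Metric.dist_le_diam_of_mem hbd hx hy
    have h2 : dist x (x + v) = r / 2 := by
      rw [dist_eq_norm, show x - (x + v) = -v from by abel, norm_neg, hnv]
    linarith
  have ht0 : 0 < t := lt_of_lt_of_le (pow_pos hd0 2) ht
  -- the product set and restricted measure
  set S : Set (EuclideanSpace ℝ (Fin m) × EuclideanSpace ℝ (Fin m)) := Ω ×ˢ Ω with hSdef
  have hSm : MeasurableSet S := (hΩ.prod hΩ).measurableSet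
  have hSbd : Bornology.IsBounded S := hbd.prod hbd
  set μ : Measure (EuclideanSpace ℝ (Fin m) × EuclideanSpace ℝ (Fin m)) :=
    volume.restrict S with hμ
  -- continuity facts
  have hbcont : Continuous
      (fun z : EuclideanSpace ℝ (Fin m) × EuclideanSpace ℝ (Fin m) => dist z.1 z.2 ^ 2) :=
    (continuous_fst.dist continuous_snd).pow 2
  have hcF : ∀ s : ℝ, Continuous
      (fun z : EuclideanSpace ℝ (Fin m) × EuclideanSpace ℝ (Fin m) =>
        (4 * Real.pi * s) ^ p * Real.exp (-(dist z.1 z.2) ^ 2 / (4 * s))) := by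
    intro s
    exact continuous_const.mul ((hbcont.neg.div_const (4 * s)).rexp)
  have hcF1 : ∀ s : ℝ, Continuous
      (fun z : EuclideanSpace ℝ (Fin m) × EuclideanSpace ℝ (Fin m) =>
        (4 * Real.pi * s) ^ p * Real.exp (-(dist z.1 z.2) ^ 2 / (4 * s))
          * (dist z.1 z.2 ^ 2 / (4 * s ^ 2) + p / s)) := by
    intro s
    exact (hcF s).mul ((hbcont.div_const (4 * s ^ 2)).add continuous_const)
  have hcF2 : ∀ s : ℝ, Continuous
      (fun z : EuclideanSpace ℝ (Fin m) × EuclideanSpace ℝ (Fin m) =>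
        (4 * Real.pi * s) ^ p * Real.exp (-(dist z.1 z.2) ^ 2 / (4 * s))
          * ((dist z.1 z.2 ^ 2 / (4 * s ^ 2) + p / s) ^ 2
            + (-(dist z.1 z.2) ^ 2 / (2 * s ^ 3) - p / s ^ 2))) := by
    intro s
    exact (hcF s).mul ((((hbcont.div_const (4 * s ^ 2)).add continuous_const).pow 2).add
      ((hbcont.neg.div_const (2 * s ^ 3)).sub continuous_const))
  -- integrability of continuous functions on S
  have hInt : ∀ g : EuclideanSpace ℝ (Fin m) × EuclideanSpace ℝ (Fin m) → ℝ,
      Continuous g → Integrable g μ := by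
    intro g hg
    rw [hμ]
    exact (ContinuousOn.integrableOn_compact hSbd.isCompact_closure
      hg.continuousOn).mono_set subset_closure
  have hconstInt : ∀ c : ℝ, Integrable (fun _ => c) μ := by
    intro c
    rw [hμ]
    exact integrableOn_const hSbd.measure_lt_top.ne
  -- Fubini
  have hfub : ∀ s : ℝ,
      (∫ x in Ω, ∫ y in Ω, (4 * Real.pi * s) ^ p * Real.exp (-(dist x y) ^ 2 / (4 * s)))
        = ∫ z, (4 * Real.pi * s) ^ p * Real.exp (-(dist z.1 z.2) ^ 2 / (4 * s)) ∂μ := by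
    intro s
    have hint : IntegrableOn
        (fun z : EuclideanSpace ℝ (Fin m) × EuclideanSpace ℝ (Fin m) =>
          (4 * Real.pi * s) ^ p * Real.exp (-(dist z.1 z.2) ^ 2 / (4 * s)))
        (Ω ×ˢ Ω) ((volume : Measure (EuclideanSpace ℝ (Fin m))).prod volume) := by
      rw [← MeasureTheory.Measure.volume_eq_prod]
      exact hInt _ (hcF s)
    rw [hμ, hSdef, MeasureTheory.Measure.volume_eq_prod]
    exact (setIntegral_prod _ hint).symm
  -- membership in ball around a point of ball t (t/4) forces s > t/2
  have hballs : ∀ s₀, s₀ ∈ Metric.ball t (t / 4) →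
      ∀ s ∈ Metric.ball s₀ (t / 4), t / 2 < s := by
    intro s₀ h₀ s hs
    rw [Metric.mem_ball, Real.dist_eq] at h₀ hs
    have h1 := abs_lt.mp h₀
    have h2 := abs_lt.mp hs
    linarith [h1.1, h1.2, h2.1, h2.2]
  -- bounds
  have habsp : |p| = (m : ℝ) / 2 := by
    rw [hp, abs_div, abs_neg, abs_of_nonneg (Nat.cast_nonneg m)]
    norm_num
  have hFle : ∀ z ∈ S, ∀ s : ℝ, t / 2 < s →
      (4 * Real.pi * s) ^ p * Real.exp (-(dist z.1 z.2) ^ 2 / (4 * s))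
        ≤ (2 * Real.pi * t) ^ p ∧
      0 ≤ (4 * Real.pi * s) ^ p * Real.exp (-(dist z.1 z.2) ^ 2 / (4 * s)) := by
    intro z _ s hs
    have hs0 : 0 < s := lt_trans (by positivity) hs
    have h1 : (4 * Real.pi * s) ^ p ≤ (2 * Real.pi * t) ^ p := by
      apply Real.rpow_le_rpow_of_nonpos (by positivity) _ hple
      nlinarith [Real.pi_pos]
    have h2 : Real.exp (-(dist z.1 z.2) ^ 2 / (4 * s)) ≤ 1 := by
      rw [Real.exp_le_one_iff]
      apply div_nonpos_of_nonpos_of_nonneg _ (by positivity)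
      simpa using sq_nonneg (dist z.1 z.2)
    constructor
    · calc (4 * Real.pi * s) ^ p * Real.exp (-(dist z.1 z.2) ^ 2 / (4 * s))
          ≤ (2 * Real.pi * t) ^ p * 1 :=
            mul_le_mul h1 h2 (Real.exp_pos _).le (Real.rpow_nonneg (by positivity) p)
        _ = (2 * Real.pi * t) ^ p := mul_one _
    · positivity
  have hqle : ∀ b : ℝ, 0 ≤ b → b ≤ Metric.diam Ω ^ 2 → ∀ s : ℝ, t / 2 < s →
      |b / (4 * s ^ 2) + p / s| ≤ Metric.diam Ω ^ 2 / t ^ 2 + (m : ℝ) / t := by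
    intro b hb0 hb2 s hs
    have hs0 : 0 < s := lt_trans (by positivity) hs
    have hts : t ^ 2 ≤ 4 * s ^ 2 := by nlinarith
    refine (abs_add_le _ _).trans (add_le_add ?_ ?_)
    · rw [abs_of_nonneg (by positivity), div_le_div_iff₀ (by positivity) (by positivity)]
      exact mul_le_mul hb2 hts (by positivity) (by positivity)
    · rw [abs_div, abs_of_pos hs0, habsp, div_le_div_iff₀ hs0 ht0]
      have hmt : (m : ℝ) * t ≤ (m : ℝ) * (2 * s) :=
        mul_le_mul_of_nonneg_left (by linarith) (Nat.cast_nonneg m)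
      linarith
  have hq'le : ∀ b : ℝ, 0 ≤ b → b ≤ Metric.diam Ω ^ 2 → ∀ s : ℝ, t / 2 < s →
      |(-b / (2 * s ^ 3) - p / s ^ 2)|
        ≤ 4 * Metric.diam Ω ^ 2 / t ^ 3 + 2 * (m : ℝ) / t ^ 2 := by
    intro b hb0 hb2 s hs
    have hs0 : 0 < s := lt_trans (by positivity) hs
    have hts : t ^ 2 ≤ 4 * s ^ 2 := by nlinarith
    have ht3 : t ^ 3 ≤ 8 * s ^ 3 := by nlinarith
    refine (abs_sub _ _).trans (add_le_add ?_ ?_)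
    · have h1 : |(-b / (2 * s ^ 3))| = b / (2 * s ^ 3) := by
        rw [abs_div, abs_of_pos (by positivity : (0:ℝ) < 2 * s ^ 3), abs_neg,
          abs_of_nonneg hb0]
      rw [h1, div_le_div_iff₀ (by positivity) (by positivity)]
      have key : b * t ^ 3 ≤ Metric.diam Ω ^ 2 * (8 * s ^ 3) :=
        mul_le_mul hb2 ht3 (by positivity) (by positivity)
      nlinarith [key]
    · rw [abs_div, abs_of_pos (by positivity : (0:ℝ) < s ^ 2), habsp,
        div_le_div_iff₀ (by positivity) (by positivity)]
      have hmt : (m : ℝ) * t ^ 2 ≤ (m : ℝ) * (4 * s ^ 2) :=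
        mul_le_mul_of_nonneg_left hts (Nat.cast_nonneg m)
      nlinarith [hmt]
  have hbF1 : ∀ z ∈ S, ∀ s : ℝ, t / 2 < s →
      ‖(4 * Real.pi * s) ^ p * Real.exp (-(dist z.1 z.2) ^ 2 / (4 * s))
          * (dist z.1 z.2 ^ 2 / (4 * s ^ 2) + p / s)‖
        ≤ (2 * Real.pi * t) ^ p * (Metric.diam Ω ^ 2 / t ^ 2 + (m : ℝ) / t) := by
    intro z hz s hs
    obtain ⟨hF, hF0⟩ := hFle z hz s hs
    have hb2 : dist z.1 z.2 ^ 2 ≤ Metric.diam Ω ^ 2 := by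
      have := Metric.dist_le_diam_of_mem hbd hz.1 hz.2
      exact pow_le_pow_left₀ dist_nonneg this 2
    have hq := hqle (dist z.1 z.2 ^ 2) (sq_nonneg _) hb2 s hs
    rw [Real.norm_eq_abs, abs_mul, abs_of_nonneg hF0]
    exact mul_le_mul hF hq (abs_nonneg _) (Real.rpow_nonneg (by positivity) p)
  have hbF2 : ∀ z ∈ S, ∀ s : ℝ, t / 2 < s →
      ‖(4 * Real.pi * s) ^ p * Real.exp (-(dist z.1 z.2) ^ 2 / (4 * s))
          * ((dist z.1 z.2 ^ 2 / (4 * s ^ 2) + p / s) ^ 2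
            + (-(dist z.1 z.2) ^ 2 / (2 * s ^ 3) - p / s ^ 2))‖
        ≤ (2 * Real.pi * t) ^ p * ((Metric.diam Ω ^ 2 / t ^ 2 + (m : ℝ) / t) ^ 2
            + (4 * Metric.diam Ω ^ 2 / t ^ 3 + 2 * (m : ℝ) / t ^ 2)) := by
    intro z hz s hs
    obtain ⟨hF, hF0⟩ := hFle z hz s hs
    have hb2 : dist z.1 z.2 ^ 2 ≤ Metric.diam Ω ^ 2 := by
      have := Metric.dist_le_diam_of_mem hbd hz.1 hz.2
      exact pow_le_pow_left₀ dist_nonneg this 2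
    have hq := hqle (dist z.1 z.2 ^ 2) (sq_nonneg _) hb2 s hs
    have hq' := hq'le (dist z.1 z.2 ^ 2) (sq_nonneg _) hb2 s hs
    have hqq : |(dist z.1 z.2 ^ 2 / (4 * s ^ 2) + p / s) ^ 2
          + (-(dist z.1 z.2) ^ 2 / (2 * s ^ 3) - p / s ^ 2)|
        ≤ (Metric.diam Ω ^ 2 / t ^ 2 + (m : ℝ) / t) ^ 2
            + (4 * Metric.diam Ω ^ 2 / t ^ 3 + 2 * (m : ℝ) / t ^ 2) := by
      refine (abs_add_le _ _).trans (add_le_add ?_ hq')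
      rw [abs_pow]
      exact pow_le_pow_left₀ (abs_nonneg _) hq 2
    rw [Real.norm_eq_abs, abs_mul, abs_of_nonneg hF0]
    exact mul_le_mul hF hqq (abs_nonneg _) (Real.rpow_nonneg (by positivity) p)
  -- first derivative
  have key1 : ∀ s₀ ∈ Metric.ball t (t / 4),
      HasDerivAt (fun s : ℝ =>
          ∫ z, (4 * Real.pi * s) ^ p * Real.exp (-(dist z.1 z.2) ^ 2 / (4 * s)) ∂μ)
        (∫ z, (4 * Real.pi * s₀) ^ p * Real.exp (-(dist z.1 z.2) ^ 2 / (4 * s₀))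
          * (dist z.1 z.2 ^ 2 / (4 * s₀ ^ 2) + p / s₀) ∂μ) s₀ := by
    intro s₀ hs₀
    have h := hasDerivAt_integral_of_dominated_loc_of_deriv_le (μ := μ) (x₀ := s₀)
      (s := Metric.ball s₀ (t / 4))
      (F := fun s z => (4 * Real.pi * s) ^ p * Real.exp (-(dist z.1 z.2) ^ 2 / (4 * s)))
      (F' := fun s z => (4 * Real.pi * s) ^ p * Real.exp (-(dist z.1 z.2) ^ 2 / (4 * s))
        * (dist z.1 z.2 ^ 2 / (4 * s ^ 2) + p / s))
      (bound := fun _ => (2 * Real.pi * t) ^ p * (Metric.diam Ω ^ 2 / t ^ 2 + (m : ℝ) / t))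
      (Metric.ball_mem_nhds _ (by positivity))
      (Filter.Eventually.of_forall fun s => (hcF s).aestronglyMeasurable)
      (hInt _ (hcF s₀))
      ((hcF1 s₀).aestronglyMeasurable)
      ?_ (hconstInt _) ?_
    · exact h.2
    · rw [hμ]
      filter_upwards [ae_restrict_mem hSm] with z hz
      intro s hs
      exact hbF1 z hz s (hballs s₀ hs₀ s hs)
    · apply Filter.Eventually.of_forall
      intro z s hs
      exact hc_hasDerivAt_F p (dist z.1 z.2 ^ 2) s
        (lt_trans (by positivity) (hballs s₀ hs₀ s hs))
  -- second derivative
  have key2 : HasDerivAt (fun s : ℝ =>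
        ∫ z, (4 * Real.pi * s) ^ p * Real.exp (-(dist z.1 z.2) ^ 2 / (4 * s))
          * (dist z.1 z.2 ^ 2 / (4 * s ^ 2) + p / s) ∂μ)
      (∫ z, (4 * Real.pi * t) ^ p * Real.exp (-(dist z.1 z.2) ^ 2 / (4 * t))
        * ((dist z.1 z.2 ^ 2 / (4 * t ^ 2) + p / t) ^ 2
          + (-(dist z.1 z.2) ^ 2 / (2 * t ^ 3) - p / t ^ 2)) ∂μ) t := by
    have h := hasDerivAt_integral_of_dominated_loc_of_deriv_le (μ := μ) (x₀ := t)
      (s := Metric.ball t (t / 4))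
      (F := fun s z => (4 * Real.pi * s) ^ p * Real.exp (-(dist z.1 z.2) ^ 2 / (4 * s))
        * (dist z.1 z.2 ^ 2 / (4 * s ^ 2) + p / s))
      (F' := fun s z => (4 * Real.pi * s) ^ p * Real.exp (-(dist z.1 z.2) ^ 2 / (4 * s))
        * ((dist z.1 z.2 ^ 2 / (4 * s ^ 2) + p / s) ^ 2
          + (-(dist z.1 z.2) ^ 2 / (2 * s ^ 3) - p / s ^ 2)))
      (bound := fun _ => (2 * Real.pi * t) ^ p * ((Metric.diam Ω ^ 2 / t ^ 2 + (m : ℝ) / t) ^ 2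
            + (4 * Metric.diam Ω ^ 2 / t ^ 3 + 2 * (m : ℝ) / t ^ 2)))
      (Metric.ball_mem_nhds _ (by positivity))
      (Filter.Eventually.of_forall fun s => (hcF1 s).aestronglyMeasurable)
      (hInt _ (hcF1 t))
      ((hcF2 t).aestronglyMeasurable)
      ?_ (hconstInt _) ?_
    · exact h.2
    · rw [hμ]
      filter_upwards [ae_restrict_mem hSm] with z hz
      intro s hs
      exact hbF2 z hz s (hballs t (Metric.mem_ball_self (by positivity)) s hs)
    · apply Filter.Eventually.of_forall
      intro z s hs
      exact hc_hasDerivAt_F1 p (dist z.1 z.2 ^ 2) s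
        (lt_trans (by positivity) (hballs t (Metric.mem_ball_self (by positivity)) s hs))
  -- put everything together
  have hHeq : (fun s : ℝ => ∫ x in Ω, ∫ y in Ω,
        (4 * Real.pi * s) ^ p * Real.exp (-(dist x y) ^ 2 / (4 * s)))
      = fun s : ℝ => ∫ z, (4 * Real.pi * s) ^ p
          * Real.exp (-(dist z.1 z.2) ^ 2 / (4 * s)) ∂μ := funext hfub
  rw [hfub t, hHeq]
  have hd1 : deriv (fun s : ℝ => ∫ z, (4 * Real.pi * s) ^ p
        * Real.exp (-(dist z.1 z.2) ^ 2 / (4 * s)) ∂μ)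
      =ᶠ[nhds t] fun s : ℝ => ∫ z, (4 * Real.pi * s) ^ p
        * Real.exp (-(dist z.1 z.2) ^ 2 / (4 * s))
        * (dist z.1 z.2 ^ 2 / (4 * s ^ 2) + p / s) ∂μ := by
    filter_upwards [Metric.ball_mem_nhds t (by positivity : (0:ℝ) < t / 4)] with s hs
    exact (key1 s hs).deriv
  rw [hd1.deriv_eq, key2.deriv]
  rw [← integral_const_mul]
  apply integral_mono_ae (hInt _ (continuous_const.mul (hcF t))) (hInt _ (hcF2 t))
  rw [hμ]
  filter_upwards [ae_restrict_mem hSm] with z hz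
  have hb2 : dist z.1 z.2 ^ 2 ≤ t := by
    have h1 := Metric.dist_le_diam_of_mem hbd hz.1 hz.2
    have h2 : dist z.1 z.2 ^ 2 ≤ Metric.diam Ω ^ 2 := pow_le_pow_left₀ dist_nonneg h1 2
    linarith
  exact hc_key m (dist z.1 z.2 ^ 2) t (sq_nonneg _) hb2 ht0
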